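/- Let Σ be a real symmetric positive definite 2n×2n matrix. Then the complex Hermitian matrix Σ + (iℏ/2)J (obtained by regarding Σ and J as complex matrices) is positive semidefinite if and only if the ellipsoid Ω := {z ∈ ℝ^{2n} : Σ⁻¹z·z ≤ 2} contains a quantum blob, i.e. iff there exists S ∈ Sp(n) with S(B^{2n}(√ℏ)) ⊆ Ω. -/

import Mathlib

open Matrix Set ComplexOrder

noncomputable section

/-- The standard symplectic matrix `J = [[0, I],[-I, 0]]` on `ℝ²ⁿ = ℝⁿ ⊕ ℝⁿ`. -/
def J (n : ℕ) : Matrix (Fin n ⊕ Fin n) (Fin n ⊕ Fin n) ℝ :=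
  Matrix.fromBlocks 0 1 (-1) 0

/-- `S ∈ Sp(n)` iff `Sᵀ J S = J`. -/
def IsSymplectic {n : ℕ} (S : Matrix (Fin n ⊕ Fin n) (Fin n ⊕ Fin n) ℝ) : Prop :=
  Sᵀ * J n * S = J n

/-- The closed ball `B²ⁿ(√ℏ) = {z : z·z ≤ ℏ}` of radius `√ℏ` centered at `0`. -/
def ballh (n : ℕ) (ℏ : ℝ) : Set (Fin n ⊕ Fin n → ℝ) :=
  {z | z ⬝ᵥ z ≤ ℏ}

set_option linter.unusedSectionVars false
set_option linter.unusedVariables false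
set_option maxHeartbeats 1000000

section Helpers
variable {ι : Type*} [Fintype ι] [DecidableEq ι]

open scoped MatrixOrder in
/-- Square root of a real psd matrix (via the continuous functional calculus). -/
def Matrix.PosSemidef.sqrt {A : Matrix ι ι ℝ} (hA : A.PosSemidef) : Matrix ι ι ℝ := CFC.sqrt A

open scoped MatrixOrder in
lemma Matrix.PosSemidef.posSemidef_sqrt {A : Matrix ι ι ℝ} (hA : A.PosSemidef) :
    hA.sqrt.PosSemidef := (CFC.sqrt_nonneg A).posSemidef

open scoped MatrixOrder in
lemma Matrix.PosSemidef.sqrt_mul_self {A : Matrix ι ι ℝ} (hA : A.PosSemidef) :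
    hA.sqrt * hA.sqrt = A := CFC.sqrt_mul_sqrt_self A hA.nonneg

open scoped MatrixOrder in
lemma Matrix.PosSemidef.eq_of_sq_eq_sq {A B : Matrix ι ι ℝ} (hA : A.PosSemidef)
    (hB : B.PosSemidef) (h : A ^ 2 = B ^ 2) : A = B :=
  (CFC.sq_eq_sq_iff A B hA.nonneg hB.nonneg).mp h

lemma dotTrans (M : Matrix ι ι ℝ) (v w : ι → ℝ) : v ⬝ᵥ M.mulVec w = Mᵀ.mulVec v ⬝ᵥ w := by
  rw [Matrix.dotProduct_mulVec, Matrix.mulVec_transpose]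

lemma symm_of_herm {P : Matrix ι ι ℝ} (hP : P.IsHermitian) : Pᵀ = P := by
  rw [← Matrix.conjTranspose_eq_transpose_of_trivial]; exact hP.eq

lemma psd_symm {P : Matrix ι ι ℝ} (hP : P.IsHermitian) (x y : ι → ℝ) :
    x ⬝ᵥ P.mulVec y = y ⬝ᵥ P.mulVec x := by
  rw [dotTrans, symm_of_herm hP, dotProduct_comm]

lemma psd_nonneg {P : Matrix ι ι ℝ} (hP : P.PosSemidef) (x : ι → ℝ) :
    0 ≤ x ⬝ᵥ P.mulVec x := by simpa using hP.dotProduct_mulVec_nonneg x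

lemma dot_self_nonneg' (x : ι → ℝ) : 0 ≤ x ⬝ᵥ x :=
  Finset.sum_nonneg fun i _ => mul_self_nonneg _

lemma dot_self_pos {x : ι → ℝ} (hx : x ≠ 0) : 0 < x ⬝ᵥ x :=
  lt_of_le_of_ne (dot_self_nonneg' x)
    (fun h => hx (dotProduct_self_eq_zero.mp h.symm))

lemma psd_posDef_of_isUnit {P : Matrix ι ι ℝ} (hP : P.PosSemidef) (hU : IsUnit P.det) :
    P.PosDef := by
  refine PosDef.of_dotProduct_mulVec_pos hP.1 (fun x hx => ?_)
  have h0 : star x ⬝ᵥ P.mulVec x ≠ 0 := by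
    rw [Ne, hP.dotProduct_mulVec_zero_iff]
    intro h
    apply hx
    have := congrArg (P⁻¹.mulVec ·) h
    simpa [Matrix.mulVec_mulVec, Matrix.nonsing_inv_mul P hU] using this
  have := hP.dotProduct_mulVec_nonneg x
  simp only [star_trivial] at *
  exact lt_of_le_of_ne this (Ne.symm h0)

/-- Cauchy–Schwarz for a psd form. -/
lemma psd_CS {P : Matrix ι ι ℝ} (hP : P.PosSemidef) (x y : ι → ℝ) :
    (x ⬝ᵥ P.mulVec y)^2 ≤ (x ⬝ᵥ P.mulVec x) * (y ⬝ᵥ P.mulVec y) := by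
  set a := x ⬝ᵥ P.mulVec x with ha
  set b := x ⬝ᵥ P.mulVec y with hb
  set c := y ⬝ᵥ P.mulVec y with hc
  have key : ∀ t : ℝ, 0 ≤ a + 2*b*t + c*t^2 := by
    intro t
    have h0 := psd_nonneg hP (x + t • y)
    have e1 : (x + t • y) ⬝ᵥ P.mulVec (x + t • y) = a + 2*b*t + c*t^2 := by
      rw [Matrix.mulVec_add, Matrix.mulVec_smul, add_dotProduct,
        dotProduct_add, dotProduct_add, dotProduct_smul,
        smul_dotProduct, smul_dotProduct, dotProduct_smul,
        psd_symm hP.1 y x]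
      push_cast [smul_eq_mul]
      ring
    linarith [e1 ▸ h0]
  have hc0 : 0 ≤ c := by simpa using key 0 |>.trans_eq (by ring) |> fun _ => psd_nonneg hP y
  rcases eq_or_lt_of_le hc0 with h | h
  · have hb0 : b = 0 := by
      by_contra hb0
      have := key (-(a+1)/(2*b))
      rw [← h] at this
      field_simp at this
      have hb2 : 0 < b^2 := by positivity
      rw [le_div_iff₀ hb2] at this
      nlinarith [key (-(a+1)/(2*b)), sq_nonneg b]
    simp [hb0]
    nlinarith [psd_nonneg hP x, hc0]
  · have ht := key (-b/c)
    have h' : a + 2*b*(-b/c) + c*(-b/c)^2 = (a*c - b^2)/c := by field_simp; ring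
    rw [h', le_div_iff₀ h] at ht
    nlinarith [ht]

/-- If posdef `P ≤ c•1` as forms then `P⁻¹ ≥ c⁻¹•1`. -/
lemma inv_lower {P : Matrix ι ι ℝ} (hP : P.PosDef) {c : ℝ} (hc : 0 < c)
    (hbd : ∀ x, x ⬝ᵥ P.mulVec x ≤ c * (x ⬝ᵥ x)) (x : ι → ℝ) :
    (1/c) * (x ⬝ᵥ x) ≤ x ⬝ᵥ P⁻¹.mulVec x := by
  by_cases hx : x = 0
  · simp [hx]
  have hdet : IsUnit P.det := (Matrix.isUnit_iff_isUnit_det _).mp hP.isUnit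
  set u := P⁻¹.mulVec x with hu
  have hPu : P.mulVec u = x := by
    rw [hu, Matrix.mulVec_mulVec, Matrix.mul_nonsing_inv P hdet, Matrix.one_mulVec]
  have e1 : x ⬝ᵥ P⁻¹.mulVec x = u ⬝ᵥ P.mulVec u := by
    rw [← hu, ← hPu, dotProduct_comm, hPu]
  have cs := psd_CS hP.posSemidef u (P.mulVec u)
  have e2 : u ⬝ᵥ P.mulVec (P.mulVec u) = x ⬝ᵥ x := by
    rw [dotTrans, symm_of_herm hP.1, hPu]
  have e3 : P.mulVec u ⬝ᵥ P.mulVec (P.mulVec u) ≤ c * (x ⬝ᵥ x) := by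
    rw [hPu]; exact hbd x
  rw [e2] at cs
  have hxx : 0 < x ⬝ᵥ x := dot_self_pos hx
  rw [e1]
  have hup : 0 ≤ u ⬝ᵥ P.mulVec u := psd_nonneg hP.posSemidef u
  rw [one_div_mul_eq_div, div_le_iff₀ hc]
  nlinarith [mul_le_mul_of_nonneg_left e3 hup, cs, hxx]

/-- If `K` psd with `K² ≤ c²•1` as forms, then `K ≤ c•1` as forms. -/
lemma upper_of_sq {K : Matrix ι ι ℝ} (hK : K.PosSemidef) {c : ℝ} (hc : 0 ≤ c)
    (hbd : ∀ x, (K.mulVec x) ⬝ᵥ (K.mulVec x) ≤ c^2 * (x ⬝ᵥ x)) (x : ι → ℝ) :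
    x ⬝ᵥ K.mulVec x ≤ c * (x ⬝ᵥ x) := by
  have cs := psd_CS (Matrix.PosSemidef.one (n := ι) (R := ℝ)) x (K.mulVec x)
  simp only [Matrix.one_mulVec] at cs
  have h1 := hbd x
  have h2 : 0 ≤ x ⬝ᵥ K.mulVec x := psd_nonneg hK x
  have h3 : 0 ≤ x ⬝ᵥ x := dot_self_nonneg' x
  nlinarith [cs, h1, h2, h3, mul_nonneg hc h3]

lemma cancel_left {A B : Matrix ι ι ℝ} (h : A * B = 1) (X : Matrix ι ι ℝ) :
    A * (B * X) = X := by rw [← Matrix.mul_assoc, h, Matrix.one_mul]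

lemma cancel_neg {A B : Matrix ι ι ℝ} (h : A * B = -1) (X : Matrix ι ι ℝ) :
    A * (B * X) = -X := by rw [← Matrix.mul_assoc, h, neg_one_mul]

lemma conj_form2 (B A : Matrix ι ι ℝ) (x y : ι → ℝ) :
    x ⬝ᵥ (Aᵀ * B * A).mulVec y = (A.mulVec x) ⬝ᵥ B.mulVec (A.mulVec y) := by
  rw [← Matrix.mulVec_mulVec, ← Matrix.mulVec_mulVec, dotTrans, Matrix.transpose_transpose]

lemma psd_tmul (A : Matrix ι ι ℝ) : (Aᵀ * A).PosSemidef := by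
  have h := Matrix.posSemidef_conjTranspose_mul_self A
  rwa [Matrix.conjTranspose_eq_transpose_of_trivial] at h

lemma psd_conj_left {P : Matrix ι ι ℝ} (hP : P.PosSemidef) (B : Matrix ι ι ℝ) :
    (B * P * Bᵀ).PosSemidef := by
  have h := hP.mul_mul_conjTranspose_same B
  rwa [Matrix.conjTranspose_eq_transpose_of_trivial] at h

lemma psd_conj_right {P : Matrix ι ι ℝ} (hP : P.PosSemidef) (B : Matrix ι ι ℝ) :
    (Bᵀ * P * B).PosSemidef := by
  have h := psd_conj_left hP Bᵀ
  rwa [Matrix.transpose_transpose] at h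

lemma dot_sq (M : Matrix ι ι ℝ) (x : ι → ℝ) :
    (M.mulVec x) ⬝ᵥ (M.mulVec x) = x ⬝ᵥ (Mᵀ * M).mulVec x := by
  rw [dotTrans, Matrix.mulVec_mulVec, dotProduct_comm]

lemma pd_conj {P : Matrix ι ι ℝ} (hP : P.PosDef) {B : Matrix ι ι ℝ} (hB : IsUnit B.det) :
    (Bᵀ * P * B).PosDef := by
  refine psd_posDef_of_isUnit (psd_conj_right hP.posSemidef B) ?_
  rw [Matrix.det_mul, Matrix.det_mul, Matrix.det_transpose]
  exact (hB.mul ((Matrix.isUnit_iff_isUnit_det _).mp hP.isUnit)).mul hB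

lemma skew_diag_zero {B : Matrix ι ι ℝ} (hB : Bᵀ = -B) (u : ι → ℝ) :
    u ⬝ᵥ B.mulVec u = 0 := by
  have h := dotTrans B u u
  rw [hB] at h
  simp only [Matrix.neg_mulVec, neg_dotProduct] at h
  linarith [h, dotProduct_comm u (B.mulVec u)]

lemma skew_swap {B : Matrix ι ι ℝ} (hB : Bᵀ = -B) (u v : ι → ℝ) :
    v ⬝ᵥ B.mulVec u = -(u ⬝ᵥ B.mulVec v) := by
  have h := dotTrans B v u
  rw [hB] at h
  simp only [Matrix.neg_mulVec, neg_dotProduct] at h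
  linarith [h, dotProduct_comm u (B.mulVec v)]

lemma mapC_conjT (B : Matrix ι ι ℝ) :
    (B.map (Complex.ofReal ·))ᴴ = Bᵀ.map (Complex.ofReal ·) := by
  ext i j
  simp [Matrix.conjTranspose_apply, Complex.conj_ofReal]

lemma mapC_neg (B : Matrix ι ι ℝ) :
    (-B).map (Complex.ofReal ·) = -(B.map (Complex.ofReal ·)) := by
  ext i j; simp

lemma cplx_form (B : Matrix ι ι ℝ) (x : ι → ℂ) :
    star x ⬝ᵥ (B.map (Complex.ofReal ·)).mulVec x =
      Complex.ofReal ((fun i => (x i).re) ⬝ᵥ B.mulVec (fun i => (x i).re)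
        + (fun i => (x i).im) ⬝ᵥ B.mulVec (fun i => (x i).im))
      + Complex.I * Complex.ofReal ((fun i => (x i).re) ⬝ᵥ B.mulVec (fun i => (x i).im)
        - (fun i => (x i).im) ⬝ᵥ B.mulVec (fun i => (x i).re)) := by
  simp only [dotProduct, mulVec, Matrix.map_apply, Pi.star_apply, Finset.mul_sum]
  apply Complex.ext <;>
    simp [Complex.mul_re, Complex.mul_im, Finset.mul_sum, Finset.sum_add_distrib,
      Finset.sum_sub_distrib] <;>
  · congr 1 <;> exact Finset.sum_congr rfl fun i _ => Finset.sum_congr rfl fun j _ => by ring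

end Helpers

section Jlemmas

lemma Jdef (n : ℕ) : J n = Matrix.fromBlocks 0 1 (-1) 0 := rfl

lemma Jtrans (n : ℕ) : (J n)ᵀ = -(J n) := by
  rw [Jdef, Matrix.fromBlocks_transpose, Matrix.fromBlocks_neg]
  simp

lemma JmulJ (n : ℕ) : J n * J n = -1 := by
  have h : (-1 : Matrix (Fin n ⊕ Fin n) (Fin n ⊕ Fin n) ℝ) = Matrix.fromBlocks (-1) 0 0 (-1) := by
    rw [← Matrix.fromBlocks_one (l := Fin n) (m := Fin n), Matrix.fromBlocks_neg]
    simp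
  rw [h, Jdef, Matrix.fromBlocks_multiply]
  simp

lemma JtJ (n : ℕ) : (J n)ᵀ * J n = 1 := by
  rw [Jtrans, Matrix.neg_mul, JmulJ, neg_neg]

lemma Jdet (n : ℕ) : IsUnit (J n).det :=
  Matrix.isUnit_det_of_right_inverse (B := -(J n)) (by rw [Matrix.mul_neg, JmulJ, neg_neg])

end Jlemmas

section LemmaQ
variable {n : ℕ}

lemma key_form (ℏ : ℝ) (Sig : Matrix (Fin n ⊕ Fin n) (Fin n ⊕ Fin n) ℝ)
    (hSig : Sig.IsHermitian) (x : Fin n ⊕ Fin n → ℂ) :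
    star x ⬝ᵥ ((Sig.map (Complex.ofReal ·) + (Complex.I * (ℏ / 2 : ℝ)) •
        (J n).map (Complex.ofReal ·)).mulVec x) =
      Complex.ofReal ((fun i => (x i).re) ⬝ᵥ Sig.mulVec (fun i => (x i).re)
        + (fun i => (x i).im) ⬝ᵥ Sig.mulVec (fun i => (x i).im)
        - ℏ * ((fun i => (x i).re) ⬝ᵥ (J n).mulVec (fun i => (x i).im))) := by
  set u : Fin n ⊕ Fin n → ℝ := fun i => (x i).re
  set v : Fin n ⊕ Fin n → ℝ := fun i => (x i).im
  rw [Matrix.add_mulVec, dotProduct_add, Matrix.smul_mulVec,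
    dotProduct_smul, cplx_form, cplx_form]
  rw [psd_symm hSig u v, skew_diag_zero (Jtrans n) u, skew_diag_zero (Jtrans n) v,
    skew_swap (Jtrans n) u v]
  push_cast
  ring_nf
  simp [Complex.ext_iff]
  ring_nf
  try constructor <;> ring
  try ring

lemma lemmaQ (ℏ : ℝ) (Sig : Matrix (Fin n ⊕ Fin n) (Fin n ⊕ Fin n) ℝ)
    (hSig : Sig.IsHermitian) :
    (Sig.map (Complex.ofReal ·) + (Complex.I * (ℏ / 2 : ℝ)) •
        (J n).map (Complex.ofReal ·)).PosSemidef
      ↔ ∀ u v : Fin n ⊕ Fin n → ℝ,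
          ℏ * (u ⬝ᵥ (J n).mulVec v) ≤ u ⬝ᵥ Sig.mulVec u + v ⬝ᵥ Sig.mulVec v := by
  constructor
  · intro h u v
    set x : Fin n ⊕ Fin n → ℂ := fun i => ⟨u i, v i⟩ with hx
    have h2 := h.dotProduct_mulVec_nonneg x
    rw [key_form ℏ Sig hSig x] at h2
    have hre : (fun i => (x i).re) = u := rfl
    have him : (fun i => (x i).im) = v := rfl
    rw [hre, him, Complex.zero_le_real] at h2
    linarith
  · intro h
    refine PosSemidef.of_dotProduct_mulVec_nonneg ?_ ?_
    · show _ᴴ = _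
      rw [Matrix.conjTranspose_add, Matrix.conjTranspose_smul, mapC_conjT,
        symm_of_herm hSig, star_mul', Complex.star_def, Complex.conj_I, Complex.conj_ofReal,
        mapC_conjT, Jtrans, mapC_neg]
      rw [smul_neg, neg_mul, neg_smul, neg_neg]
    · intro x
      rw [key_form ℏ Sig hSig x, Complex.zero_le_real]
      linarith [h (fun i => (x i).re) (fun i => (x i).im)]

end LemmaQ

section Construction
variable {n : ℕ}
theorem chunk1 (ℏ c : ℝ) (hℏ : 0 < ℏ) (hc : c = 2/ℏ)
    (Sig : Matrix (Fin n ⊕ Fin n) (Fin n ⊕ Fin n) ℝ) (hSig : Sig.PosDef)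
    (hq : ∀ u v : Fin n ⊕ Fin n → ℝ,
      ℏ * (u ⬝ᵥ (J n).mulVec v) ≤ u ⬝ᵥ Sig.mulVec u + v ⬝ᵥ Sig.mulVec v) :
    ∃ S : Matrix (Fin n ⊕ Fin n) (Fin n ⊕ Fin n) ℝ,
      IsSymplectic S ∧ ∀ z, Sig⁻¹.mulVec (S.mulVec z) ⬝ᵥ (S.mulVec z) ≤ c * (z ⬝ᵥ z) := by
  have hc0 : 0 < c := by rw [hc]; positivity
  have hSdet : IsUnit Sig.det := (Matrix.isUnit_iff_isUnit_det _).mp hSig.isUnit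
  -- the square root R of Sig
  have hSpsd := hSig.posSemidef
  obtain ⟨R, hRdef⟩ : ∃ X, X = hSpsd.sqrt := ⟨_, rfl⟩
  have hRpsd : R.PosSemidef := by rw [hRdef]; exact hSpsd.posSemidef_sqrt
  have hRR : R * R = Sig := by rw [hRdef]; exact hSpsd.sqrt_mul_self
  have hRdet : IsUnit R.det := by
    have h : IsUnit (R.det * R.det) := by rw [← Matrix.det_mul, hRR]; exact hSdet
    exact isUnit_of_mul_isUnit_left h
  have hRt : Rᵀ = R := symm_of_herm hRpsd.1
  have hRi : R * R⁻¹ = 1 := Matrix.mul_nonsing_inv R hRdet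
  have hRi' : R⁻¹ * R = 1 := Matrix.nonsing_inv_mul R hRdet
  have hRit : (R⁻¹)ᵀ = R⁻¹ := by rw [Matrix.transpose_nonsing_inv, hRt]
  -- A' and A
  obtain ⟨A', hA'def⟩ : ∃ X, X = R * J n * R := ⟨_, rfl⟩
  obtain ⟨A, hAdef⟩ : ∃ X, X = R⁻¹ * J n * R⁻¹ := ⟨_, rfl⟩
  have hA't : A'ᵀ = -A' := by
    rw [hA'def]
    simp [Matrix.transpose_mul, hRt, Jtrans, Matrix.mul_assoc]
  have hAt : Aᵀ = -A := by
    rw [hAdef]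
    simp [Matrix.transpose_mul, hRit, Jtrans, Matrix.mul_assoc]
  have hA'det : IsUnit A'.det := by
    rw [hA'def, Matrix.det_mul, Matrix.det_mul]
    exact (hRdet.mul (Jdet n)).mul hRdet
  have hA'A : A' * A = -1 := by
    rw [hA'def, hAdef]
    simp only [Matrix.mul_assoc]
    rw [cancel_left hRi, cancel_neg (JmulJ n), Matrix.mul_neg, hRi]
  have hAA' : A * A' = -1 := by
    rw [hA'def, hAdef]
    simp only [Matrix.mul_assoc]
    rw [cancel_left hRi', cancel_neg (JmulJ n), Matrix.mul_neg, hRi']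
  have hRAR : R * (A * R) = J n := by
    rw [hAdef]
    simp only [Matrix.mul_assoc]
    rw [cancel_left hRi, hRi', Matrix.mul_one]
  -- the bound ‖A b‖² ≤ c² ‖b‖²
  have hRinvSR : R⁻¹ * Sig * R⁻¹ = 1 := by
    rw [← hRR]
    simp only [Matrix.mul_assoc]
    rw [cancel_left hRi', hRi]
  have key1 : ∀ a b : Fin n ⊕ Fin n → ℝ,
      ℏ * (a ⬝ᵥ A.mulVec b) ≤ a ⬝ᵥ a + b ⬝ᵥ b := by
    intro a b
    have h := hq (R⁻¹.mulVec a) (R⁻¹.mulVec b)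
    have eS : ∀ x : Fin n ⊕ Fin n → ℝ,
        (R⁻¹.mulVec x) ⬝ᵥ Sig.mulVec (R⁻¹.mulVec x) = x ⬝ᵥ x := by
      intro x
      rw [← conj_form2 Sig R⁻¹ x x, hRit, hRinvSR, Matrix.one_mulVec]
    have eJ : (R⁻¹.mulVec a) ⬝ᵥ (J n).mulVec (R⁻¹.mulVec b) = a ⬝ᵥ A.mulVec b := by
      rw [← conj_form2 (J n) R⁻¹ a b, hRit, ← hAdef]
    rw [eS, eS, eJ] at h
    exact h
  have hAbd : ∀ b, (A.mulVec b) ⬝ᵥ (A.mulVec b) ≤ c^2 * (b ⬝ᵥ b) := by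
    intro b
    have h := key1 ((ℏ/2) • A.mulVec b) b
    rw [smul_dotProduct, smul_dotProduct, dotProduct_smul] at h
    simp only [smul_eq_mul] at h
    have hcc : c^2 = 4/(ℏ^2) := by rw [hc]; field_simp; ring
    rw [hcc, div_mul_eq_mul_div, le_div_iff₀ (by positivity : (0:ℝ) < ℏ^2)]
    nlinarith [h]
  -- P' = A'ᵀ A' and its square root L
  obtain ⟨P', hP'def⟩ : ∃ X, X = A'ᵀ * A' := ⟨_, rfl⟩
  have hP'psd : P'.PosSemidef := by rw [hP'def]; exact psd_tmul A'
  have hP'det : IsUnit P'.det := by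
    rw [hP'def, Matrix.det_mul, Matrix.det_transpose]; exact hA'det.mul hA'det
  have hP'pd : P'.PosDef := psd_posDef_of_isUnit hP'psd hP'det
  have hP'i : P' * P'⁻¹ = 1 := Matrix.mul_nonsing_inv _ hP'det
  obtain ⟨L, hLdef⟩ : ∃ X, X = hP'psd.sqrt := ⟨_, rfl⟩
  have hLpsd : L.PosSemidef := by rw [hLdef]; exact hP'psd.posSemidef_sqrt
  have hLL : L * L = P' := by rw [hLdef]; exact hP'psd.sqrt_mul_self
  have hLdet : IsUnit L.det := by
    have h : IsUnit (L.det * L.det) := by rw [← Matrix.det_mul, hLL]; exact hP'det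
    exact isUnit_of_mul_isUnit_left h
  have hLpd : L.PosDef := psd_posDef_of_isUnit hLpsd hLdet
  have hLt : Lᵀ = L := symm_of_herm hLpsd.1
  have hLi : L * L⁻¹ = 1 := Matrix.mul_nonsing_inv L hLdet
  have hLi' : L⁻¹ * L = 1 := Matrix.nonsing_inv_mul L hLdet
  have hLit : (L⁻¹)ᵀ = L⁻¹ := by rw [Matrix.transpose_nonsing_inv, hLt]
  have hA'i : A' * A'⁻¹ = 1 := Matrix.mul_nonsing_inv _ hA'det
  have hA'i' : A'⁻¹ * A' = 1 := Matrix.nonsing_inv_mul _ hA'det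
  have hA'inv : A'⁻¹ = P'⁻¹ * A'ᵀ := by
    refine Matrix.inv_eq_left_inv ?_
    rw [Matrix.mul_assoc, ← hP'def, Matrix.nonsing_inv_mul _ hP'det]
  have hLP'inv : L * P'⁻¹ = L⁻¹ := by
    rw [← hLL, Matrix.mul_inv_rev, cancel_left hLi]
  have hXeq : A' * L * A'⁻¹ = A' * (L⁻¹ * A'ᵀ) := by
    rw [hA'inv]
    simp only [Matrix.mul_assoc]
    rw [← Matrix.mul_assoc L, hLP'inv]
  have hXpsd : (A' * L * A'⁻¹).PosSemidef := by
    rw [hXeq, ← Matrix.mul_assoc]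
    exact psd_conj_left hLpd.inv.posSemidef A'
  have hA'P' : A' * P' = P' * A' := by
    rw [hP'def, hA't]
    simp only [Matrix.neg_mul, Matrix.mul_neg, Matrix.mul_assoc]
  have hXsq : (A' * L * A'⁻¹) ^ 2 = L ^ 2 := by
    rw [pow_two, pow_two, hLL]
    simp only [Matrix.mul_assoc]
    rw [cancel_left hA'i']
    rw [← Matrix.mul_assoc L L, hLL]
    rw [← Matrix.mul_assoc A' P', hA'P', Matrix.mul_assoc, hA'i, Matrix.mul_one]
  have hcomm : A' * L = L * A' := by
    have h := hXpsd.eq_of_sq_eq_sq hLpsd hXsq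
    have h2 : A' * L * A'⁻¹ * A' = L * A' := by rw [h]
    rw [Matrix.mul_assoc, hA'i', Matrix.mul_one] at h2
    exact h2
  have hcommInv : L⁻¹ * A' = A' * L⁻¹ := by
    have h1 : L⁻¹ * (A' * L) * L⁻¹ = L⁻¹ * A' := by
      simp only [Matrix.mul_assoc]
      rw [hLi, Matrix.mul_one]
    have h2 : L⁻¹ * (L * A') * L⁻¹ = A' * L⁻¹ := by
      rw [← Matrix.mul_assoc, hLi', Matrix.one_mul]
    rw [← h1, hcomm, h2]
  -- G = R L⁻¹ R
  obtain ⟨G, hGdef⟩ : ∃ X, X = R * L⁻¹ * R := ⟨_, rfl⟩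
  have hGpd : G.PosDef := by
    have h := pd_conj hLpd.inv hRdet
    rwa [hRt, ← hGdef] at h
  have hGdet : IsUnit G.det := (Matrix.isUnit_iff_isUnit_det _).mp hGpd.isUnit
  have hAP' : A * P' = A' := by
    rw [hP'def, hA't, Matrix.neg_mul, Matrix.mul_neg, ← Matrix.mul_assoc, hAA',
      Matrix.neg_mul, neg_neg, Matrix.one_mul]
  have hA'P'inv : A' * P'⁻¹ = A := by
    rw [← hAP', Matrix.mul_assoc, hP'i, Matrix.mul_one]
  have hLinvLinv : L⁻¹ * L⁻¹ = P'⁻¹ := by rw [← Matrix.mul_inv_rev, hLL]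
  have hGJG : G * (J n * G) = J n := by
    rw [hGdef]
    simp only [Matrix.mul_assoc]
    -- R * (L⁻¹ * (R * (J * (R * (L⁻¹ * R)))))
    rw [← Matrix.mul_assoc (J n) R, ← Matrix.mul_assoc R (J n * R), ← Matrix.mul_assoc R (J n),
      ← hA'def]
    -- now : R * (L⁻¹ * (A' * (L⁻¹ * R)))
    rw [← Matrix.mul_assoc L⁻¹ A', hcommInv, Matrix.mul_assoc A', ← Matrix.mul_assoc L⁻¹ L⁻¹,
      hLinvLinv, ← Matrix.mul_assoc A', hA'P'inv, ← hRAR]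
  -- S = sqrt G
  have hGpsd := hGpd.posSemidef
  obtain ⟨S, hSdef2⟩ : ∃ X, X = hGpsd.sqrt := ⟨_, rfl⟩
  have hSpsd2 : S.PosSemidef := by rw [hSdef2]; exact hGpsd.posSemidef_sqrt
  have hSSG : S * S = G := by rw [hSdef2]; exact hGpsd.sqrt_mul_self
  have hSdet2 : IsUnit S.det := by
    have h : IsUnit (S.det * S.det) := by rw [← Matrix.det_mul, hSSG]; exact hGdet
    exact isUnit_of_mul_isUnit_left h
  have hSpd : S.PosDef := psd_posDef_of_isUnit hSpsd2 hSdet2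
  have hSt : Sᵀ = S := symm_of_herm hSpsd2.1
  have hSi : S * S⁻¹ = 1 := Matrix.mul_nonsing_inv S hSdet2
  have hSi' : S⁻¹ * S = 1 := Matrix.nonsing_inv_mul S hSdet2
  have hSit : (S⁻¹)ᵀ = S⁻¹ := by rw [Matrix.transpose_nonsing_inv, hSt]
  have hGinv : G⁻¹ = J n * G * (J n)ᵀ := by
    refine Matrix.inv_eq_left_inv ?_
    rw [Jtrans]
    simp only [Matrix.mul_neg, Matrix.neg_mul, Matrix.mul_assoc]
    rw [hGJG, JmulJ, neg_neg]
  have hX'psd : (J n * S * (J n)ᵀ).PosSemidef := psd_conj_left hSpsd2 (J n)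
  have hSinvpsd : (S⁻¹).PosSemidef := hSpd.inv.posSemidef
  have hsq : (J n * S * (J n)ᵀ)^2 = (S⁻¹)^2 := by
    rw [pow_two, pow_two]
    have e1 : S⁻¹ * S⁻¹ = G⁻¹ := by rw [← Matrix.mul_inv_rev, hSSG]
    rw [e1, hGinv]
    simp only [Matrix.mul_assoc]
    rw [cancel_left (JtJ n), ← Matrix.mul_assoc S S, hSSG]
  have hXS : J n * S * (J n)ᵀ = S⁻¹ := hX'psd.eq_of_sq_eq_sq hSinvpsd hsq
  have hsymp : IsSymplectic S := by
    show Sᵀ * J n * S = J n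
    rw [hSt]
    have h2 : S * (J n * S * (J n)ᵀ) = 1 := by rw [hXS, hSi]
    have h3 : (S * (J n * S * (J n)ᵀ)) * J n = J n := by rw [h2, Matrix.one_mul]
    simp only [Matrix.mul_assoc] at h3 ⊢
    rw [JtJ, Matrix.mul_one] at h3
    exact h3
  -- the bound on L
  have hP'invAA : P'⁻¹ = Aᵀ * A := by
    have h4 : (Aᵀ * A) * P' = 1 := by
      rw [hAt, hP'def, hA't]
      simp only [Matrix.neg_mul, Matrix.mul_neg, neg_neg, Matrix.mul_assoc]
      rw [cancel_neg hAA', Matrix.mul_neg, hAA', neg_neg]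
    exact (Matrix.inv_eq_left_inv h4)
  have hLinvbd : ∀ x, x ⬝ᵥ L⁻¹.mulVec x ≤ c * (x ⬝ᵥ x) := by
    apply upper_of_sq hLpd.inv.posSemidef (le_of_lt hc0)
    intro x
    have e1 : (L⁻¹.mulVec x) ⬝ᵥ (L⁻¹.mulVec x) = (A.mulVec x) ⬝ᵥ (A.mulVec x) := by
      rw [dot_sq L⁻¹ x, dot_sq A x, hLit, hLinvLinv, ← hP'invAA]
    rw [e1]
    exact hAbd x
  have hLlow : ∀ x, (1/c) * (x ⬝ᵥ x) ≤ x ⬝ᵥ L.mulVec x := by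
    intro x
    have h2 := inv_lower hLpd.inv hc0 hLinvbd x
    rwa [Matrix.nonsing_inv_nonsing_inv L hLdet] at h2
  -- conclusion
  refine ⟨S, hsymp, ?_⟩
  intro z
  obtain ⟨w, hwdef⟩ : ∃ X, X = (R⁻¹ * S).mulVec z := ⟨_, rfl⟩
  have hTinv : (S⁻¹ * R) * (R⁻¹ * S) = 1 := by
    simp only [Matrix.mul_assoc]
    rw [cancel_left hRi, hSi']
  have hzw : (S⁻¹ * R).mulVec w = z := by
    rw [hwdef, Matrix.mulVec_mulVec, hTinv, Matrix.one_mulVec]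
  have e1 : Sig⁻¹.mulVec (S.mulVec z) ⬝ᵥ (S.mulVec z) = w ⬝ᵥ w := by
    have hSiginv : Sig⁻¹ = R⁻¹ * R⁻¹ := by rw [← hRR, Matrix.mul_inv_rev]
    rw [dotProduct_comm, hSiginv, ← Matrix.mulVec_mulVec, dotTrans, hRit,
      Matrix.mulVec_mulVec, ← hwdef]
  have e2 : z ⬝ᵥ z = w ⬝ᵥ L.mulVec w := by
    conv_lhs => rw [← hzw]
    rw [dot_sq (S⁻¹ * R) w]
    have e3 : (S⁻¹ * R)ᵀ * (S⁻¹ * R) = L := by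
      rw [Matrix.transpose_mul, hRt, hSit]
      have e4 : S⁻¹ * S⁻¹ = G⁻¹ := by rw [← Matrix.mul_inv_rev, hSSG]
      have e5 : G⁻¹ = R⁻¹ * (L * R⁻¹) := by
        rw [hGdef, Matrix.mul_inv_rev, Matrix.mul_inv_rev, Matrix.nonsing_inv_nonsing_inv L hLdet]
      simp only [Matrix.mul_assoc]
      rw [← Matrix.mul_assoc S⁻¹ S⁻¹, e4, e5]
      simp only [Matrix.mul_assoc]
      rw [cancel_left hRi, hRi', Matrix.mul_one]
    rw [e3]
  rw [e1, e2]
  have h5 := mul_le_mul_of_nonneg_left (hLlow w) hc0.le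
  have h6 : c * (1/c) = 1 := by field_simp
  rw [← mul_assoc, h6, one_mul] at h5
  exact h5
end Construction


section Converse
variable {n : ℕ}
theorem chunk2 (ℏ c : ℝ) (hℏ : 0 < ℏ) (hc : c = 2/ℏ)
    (Sig : Matrix (Fin n ⊕ Fin n) (Fin n ⊕ Fin n) ℝ) (hSig : Sig.PosDef)
    (S : Matrix (Fin n ⊕ Fin n) (Fin n ⊕ Fin n) ℝ) (hS : IsSymplectic S)
    (hbd : ∀ z, Sig⁻¹.mulVec (S.mulVec z) ⬝ᵥ (S.mulVec z) ≤ c * (z ⬝ᵥ z)) :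
    ∀ u v : Fin n ⊕ Fin n → ℝ,
      ℏ * (u ⬝ᵥ (J n).mulVec v) ≤ u ⬝ᵥ Sig.mulVec u + v ⬝ᵥ Sig.mulVec v := by
  have hc0 : 0 < c := by rw [hc]; positivity
  have hSymp : Sᵀ * J n * S = J n := hS
  -- S is invertible
  have hSdet : IsUnit S.det := by
    have h1 := congrArg Matrix.det hSymp
    rw [Matrix.det_mul, Matrix.det_mul, Matrix.det_transpose] at h1
    have hJ := (Jdet n).ne_zero
    rw [isUnit_iff_ne_zero]
    intro h0
    rw [h0] at h1
    simp at h1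
    exact hJ h1.symm
  have hSi : S * S⁻¹ = 1 := Matrix.mul_nonsing_inv S hSdet
  have hSi' : S⁻¹ * S = 1 := Matrix.nonsing_inv_mul S hSdet
  -- S J Sᵀ = J
  have hSinv : S⁻¹ = -((J n) * Sᵀ * (J n)) := by
    refine Matrix.inv_eq_left_inv ?_
    rw [Matrix.neg_mul, Matrix.mul_assoc, Matrix.mul_assoc, ← Matrix.mul_assoc Sᵀ, hSymp,
      JmulJ]
    simp
  have hSJSt : S * (J n) * Sᵀ = J n := by
    have h2 : S * S⁻¹ = 1 := hSi
    rw [hSinv] at h2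
    -- S * -(J*Sᵀ*J) = 1
    rw [Matrix.mul_neg, neg_eq_iff_eq_neg] at h2
    -- S * (J*Sᵀ*J) = -1
    have h3 := congrArg (· * (J n)) h2
    simp only [Matrix.mul_assoc, Matrix.neg_mul, Matrix.one_mul] at h3
    rw [JmulJ] at h3
    simp only [Matrix.mul_neg, Matrix.mul_one, neg_neg, neg_inj] at h3
    rw [Matrix.mul_assoc]
    exact h3
  -- the posdef matrix F = Sᵀ Σ⁻¹ S and its bound
  have hF : ∀ x, x ⬝ᵥ (Sᵀ * Sig⁻¹ * S).mulVec x ≤ c * (x ⬝ᵥ x) := by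
    intro x
    rw [conj_form2]
    rw [dotProduct_comm]
    exact hbd x
  have hFpd : (Sᵀ * Sig⁻¹ * S).PosDef := by
    refine psd_posDef_of_isUnit ?_ ?_
    · exact psd_conj_right hSig.inv.posSemidef S
    · rw [Matrix.det_mul, Matrix.det_mul, Matrix.det_transpose]
      exact (hSdet.mul ((Matrix.isUnit_iff_isUnit_det _).mp hSig.inv.isUnit)).mul hSdet
  have hFinv : (Sᵀ * Sig⁻¹ * S)⁻¹ = S⁻¹ * Sig * (Sᵀ)⁻¹ := by
    rw [Matrix.mul_inv_rev, Matrix.mul_inv_rev, Matrix.nonsing_inv_nonsing_inv _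
      ((Matrix.isUnit_iff_isUnit_det _).mp hSig.isUnit)]
    simp only [Matrix.mul_assoc]
  have hE := inv_lower hFpd hc0 hF
  rw [hFinv] at hE
  -- now the main estimate
  intro u v
  have hStdet : IsUnit Sᵀ.det := by rwa [Matrix.det_transpose]
  have hSti' : (Sᵀ)⁻¹ * Sᵀ = 1 := Matrix.nonsing_inv_mul _ hStdet
  have eSig : ∀ x : Fin n ⊕ Fin n → ℝ,
      x ⬝ᵥ Sig.mulVec x = (Sᵀ.mulVec x) ⬝ᵥ (S⁻¹ * Sig * (Sᵀ)⁻¹).mulVec (Sᵀ.mulVec x) := by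
    intro x
    have h5 : S⁻¹ * Sig * (Sᵀ)⁻¹ = ((Sᵀ)⁻¹)ᵀ * Sig * (Sᵀ)⁻¹ := by
      rw [Matrix.transpose_nonsing_inv, Matrix.transpose_transpose]
    rw [h5, conj_form2, Matrix.mulVec_mulVec, hSti', Matrix.one_mulVec]
  have eJ : u ⬝ᵥ (J n).mulVec v = (Sᵀ.mulVec u) ⬝ᵥ (J n).mulVec (Sᵀ.mulVec v) := by
    have h6 : J n = Sᵀᵀ * (J n) * Sᵀ := by
      rw [Matrix.transpose_transpose, hSJSt]
    conv_lhs => rw [h6]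
    rw [conj_form2]
  -- Cauchy-Schwarz on the standard inner product
  obtain ⟨a, hadef⟩ : ∃ X, X = Sᵀ.mulVec u := ⟨_, rfl⟩
  obtain ⟨b, hbdef⟩ : ∃ X, X = Sᵀ.mulVec v := ⟨_, rfl⟩
  rw [eSig u, eSig v, eJ, ← hadef, ← hbdef]
  have hcs := psd_CS (Matrix.PosSemidef.one (n := Fin n ⊕ Fin n) (R := ℝ)) a ((J n).mulVec b)
  simp only [Matrix.one_mulVec] at hcs
  have hJb : ((J n).mulVec b) ⬝ᵥ ((J n).mulVec b) = b ⬝ᵥ b := by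
    rw [dot_sq, JtJ, Matrix.one_mulVec]
  rw [hJb] at hcs
  have h7 : 2 * (a ⬝ᵥ (J n).mulVec b) ≤ (a ⬝ᵥ a) + (b ⬝ᵥ b) := by
    nlinarith [hcs, sq_nonneg ((a ⬝ᵥ a) - (b ⬝ᵥ b)), sq_nonneg ((a ⬝ᵥ a) + (b ⬝ᵥ b)),
      dot_self_nonneg' a, dot_self_nonneg' b]
  have hEa := hE a
  have hEb := hE b
  have hcinv : 1/c = ℏ/2 := by rw [hc]; field_simp
  rw [hcinv] at hEa hEb
  nlinarith [hEa, hEb, h7, hℏ]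
end Converse


/-- for a real symmetric positive definite `2n×2n` matrix `Σ`, the
complex matrix `Σ + (iℏ/2)J` is positive semidefinite if and only if the covariance
ellipsoid `Ω = {z : Σ⁻¹z·z ≤ 2}` contains a quantum blob `S(B²ⁿ(√ℏ))`, `S ∈ Sp(n)`. -/
theorem quantum_condition_iff_contains_quantum_blob
    {n : ℕ} (ℏ : ℝ) (hℏ : 0 < ℏ)
    (Sig : Matrix (Fin n ⊕ Fin n) (Fin n ⊕ Fin n) ℝ) (hSig : Sig.PosDef)
    (Ω : Set (Fin n ⊕ Fin n → ℝ)) (hΩ : Ω = {z | Sig⁻¹.mulVec z ⬝ᵥ z ≤ 2}) :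
    (Sig.map (Complex.ofReal ·) + (Complex.I * (ℏ / 2 : ℝ)) •
        (J n).map (Complex.ofReal ·)).PosSemidef
      ↔ ∃ S : Matrix (Fin n ⊕ Fin n) (Fin n ⊕ Fin n) ℝ,
          IsSymplectic S ∧ (fun z => S.mulVec z) '' ballh n ℏ ⊆ Ω := by
  rw [lemmaQ ℏ Sig hSig.1, hΩ]
  constructor
  · intro hq
    obtain ⟨S, hsymp, hbd⟩ := chunk1 ℏ (2/ℏ) hℏ rfl Sig hSig hq
    refine ⟨S, hsymp, ?_⟩
    rintro y ⟨z, hz, rfl⟩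
    simp only [Set.mem_setOf_eq]
    have h1 := hbd z
    have hz' : z ⬝ᵥ z ≤ ℏ := hz
    have h2 : (2/ℏ) * (z ⬝ᵥ z) ≤ 2 := by
      rw [div_mul_eq_mul_div, div_le_iff₀ hℏ]
      nlinarith [hz']
    linarith
  · rintro ⟨S, hsymp, hsub⟩
    apply chunk2 ℏ (2/ℏ) hℏ rfl Sig hSig S hsymp
    intro z
    by_cases hz : z = 0
    · simp [hz]
    · have hzz : 0 < z ⬝ᵥ z := dot_self_pos hz
      obtain ⟨t, htdef⟩ : ∃ X : ℝ, X = Real.sqrt (ℏ / (z ⬝ᵥ z)) := ⟨_, rfl⟩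
      have ht0 : 0 < t := by rw [htdef]; exact Real.sqrt_pos.mpr (div_pos hℏ hzz)
      have htt : t * t = ℏ / (z ⬝ᵥ z) := by
        rw [htdef]; exact Real.mul_self_sqrt (le_of_lt (div_pos hℏ hzz))
      have htz : (t • z) ⬝ᵥ (t • z) = ℏ := by
        rw [smul_dotProduct, dotProduct_smul, smul_eq_mul, smul_eq_mul,
          ← mul_assoc, htt]
        field_simp
      have hmem : t • z ∈ ballh n ℏ := le_of_eq htz
      have happ := hsub (Set.mem_image_of_mem _ hmem)
      simp only [Set.mem_setOf_eq] at happ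
      rw [Matrix.mulVec_smul, Matrix.mulVec_smul, smul_dotProduct,
        dotProduct_smul, smul_eq_mul, smul_eq_mul, ← mul_assoc, htt] at happ
      -- happ : ℏ/(z⬝z) * (Σ⁻¹ (Sz) ⬝ Sz) ≤ 2
      have h3 := mul_le_mul_of_nonneg_left happ (le_of_lt (div_pos hzz hℏ))
      have h4 : ∀ X : ℝ, (z ⬝ᵥ z)/ℏ * (ℏ/(z ⬝ᵥ z) * X) = X := by
        intro X
        field_simp
      rw [h4 _] at h3
      calc Sig⁻¹.mulVec (S.mulVec z) ⬝ᵥ (S.mulVec z) ≤ (z ⬝ᵥ z)/ℏ * 2 := h3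
        _ = 2/ℏ * (z ⬝ᵥ z) := by ring
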